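/- arXiv:2310.19028 — 4 statements merged into one kernel-verified Lean document; each statement's English description precedes it below -/
import Mathlib

section
/- Let ρ = Σ_{i=1}^D p_i · ρ_L^i ⊗ ρ_R^i be a separable state, where (p_i) is a probability distribution and ρ_L^i, ρ_R^i are density matrices on H_L and H_R respectively. Then there exist density matrices θ_L on H_L and θ_R on H_R such that ρ ⪯ D² · θ_L ⊗ θ_R. -/
open Matrix ComplexOrder Kronecker

lemma my_conjTranspose_kronecker {l r : Type*} (A : Matrix l l ℂ) (B : Matrix r r ℂ) :
    (A ⊗ₖ B)ᴴ = Aᴴ ⊗ₖ Bᴴ := by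
  ext ⟨a, b⟩ ⟨c, d⟩
  simp [conjTranspose_apply, kroneckerMap_apply, mul_comm]

lemma my_psd_kron {l r : Type*} [Fintype l] [Fintype r] {A : Matrix l l ℂ} {B : Matrix r r ℂ}
    (hA : A.PosSemidef) (hB : B.PosSemidef) : (A ⊗ₖ B).PosSemidef := by
  exact hA.kronecker hB

lemma my_psd_smul {n : Type*} [Fintype n] {M : Matrix n n ℂ} (hM : M.PosSemidef)
    {c : ℝ} (hc : 0 ≤ c) : (c • M).PosSemidef := by
  constructor
  · unfold Matrix.IsHermitian
    rw [conjTranspose_smul, hM.1, star_trivial]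
  · intro x
    exact (hM.smul hc).2 x

lemma my_psd_sum {n ι : Type*} [Fintype n] (s : Finset ι) (f : ι → Matrix n n ℂ)
    (hf : ∀ i ∈ s, (f i).PosSemidef) : (∑ i ∈ s, f i).PosSemidef := by
  classical
  induction s using Finset.induction_on with
  | empty => simpa using Matrix.PosSemidef.zero
  | insert a s' hns ih =>
    rw [Finset.sum_insert hns]
    exact (hf a (Finset.mem_insert_self a s')).add (ih fun i hi => hf i (Finset.mem_insert_of_mem hi))

lemma my_sum_kronecker {l r ι : Type*} (s : Finset ι) (A : ι → Matrix l l ℂ) (B : Matrix r r ℂ) :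
    (∑ i ∈ s, A i) ⊗ₖ B = ∑ i ∈ s, A i ⊗ₖ B := by
  ext ⟨a, b⟩ ⟨c, d⟩
  simp [kroneckerMap_apply, Matrix.sum_apply, Finset.sum_mul]

lemma my_kronecker_sum {l r ι : Type*} (s : Finset ι) (A : Matrix l l ℂ) (B : ι → Matrix r r ℂ) :
    A ⊗ₖ (∑ i ∈ s, B i) = ∑ i ∈ s, A ⊗ₖ B i := by
  ext ⟨a, b⟩ ⟨c, d⟩
  simp [kroneckerMap_apply, Matrix.sum_apply, Finset.mul_sum]

/-- a separable state `ρ = Σ_{i=1}^D p_i ρ_L^i ⊗ ρ_R^i` satisfies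
`ρ ⪯ D² θ_L ⊗ θ_R` for some states `θ_L`, `θ_R`. -/
theorem separable_le_product {l r : Type*} [Fintype l] [DecidableEq l]
    [Fintype r] [DecidableEq r]
    (D : ℕ) (hD : 0 < D) (p : Fin D → ℝ)
    (hp : ∀ i, 0 ≤ p i) (hp1 : ∑ i, p i = 1)
    (ρL : Fin D → Matrix l l ℂ) (ρR : Fin D → Matrix r r ℂ)
    (hρL : ∀ i, (ρL i).PosSemidef) (hρLt : ∀ i, (ρL i).trace = 1)
    (hρR : ∀ i, (ρR i).PosSemidef) (hρRt : ∀ i, (ρR i).trace = 1) :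
    ∃ θL : Matrix l l ℂ, ∃ θR : Matrix r r ℂ,
      θL.PosSemidef ∧ θL.trace = 1 ∧ θR.PosSemidef ∧ θR.trace = 1 ∧
      (((D : ℝ) ^ 2) • (θL ⊗ₖ θR) - ∑ i, p i • (ρL i ⊗ₖ ρR i)).PosSemidef := by
  have hDne : (D : ℝ) ≠ 0 := Nat.cast_ne_zero.mpr hD.ne'
  have hDinv : (0:ℝ) ≤ (D : ℝ)⁻¹ := inv_nonneg.mpr (Nat.cast_nonneg D)
  have hple : ∀ i, p i ≤ 1 := fun i =>
    hp1 ▸ Finset.single_le_sum (fun j _ => hp j) (Finset.mem_univ i)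
  refine ⟨(D : ℝ)⁻¹ • ∑ i, ρL i, (D : ℝ)⁻¹ • ∑ i, ρR i,
    my_psd_smul (my_psd_sum _ _ fun i _ => hρL i) hDinv, ?_,
    my_psd_smul (my_psd_sum _ _ fun i _ => hρR i) hDinv, ?_, ?_⟩
  · rw [trace_smul, trace_sum]
    simp only [hρLt, Finset.sum_const, Finset.card_univ, Fintype.card_fin, nsmul_eq_mul, mul_one,
      Complex.real_smul, Complex.ofReal_inv, Complex.ofReal_natCast]
    exact inv_mul_cancel₀ (Nat.cast_ne_zero.mpr hD.ne')
  · rw [trace_smul, trace_sum]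
    simp only [hρRt, Finset.sum_const, Finset.card_univ, Fintype.card_fin, nsmul_eq_mul, mul_one,
      Complex.real_smul, Complex.ofReal_inv, Complex.ofReal_natCast]
    exact inv_mul_cancel₀ (Nat.cast_ne_zero.mpr hD.ne')
  · have h1 : ((D : ℝ) ^ 2) • (((D : ℝ)⁻¹ • ∑ i, ρL i) ⊗ₖ ((D : ℝ)⁻¹ • ∑ i, ρR i))
        = ∑ i : Fin D, ∑ j : Fin D, ρL i ⊗ₖ ρR j := by
      rw [smul_kronecker, kronecker_smul, smul_smul, smul_smul]
      have h : (D : ℝ) ^ 2 * (D : ℝ)⁻¹ * (D : ℝ)⁻¹ = 1 := by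
        field_simp
      rw [h, one_smul, my_sum_kronecker]
      exact Finset.sum_congr rfl fun i _ => my_kronecker_sum _ _ _
    have h2 : (∑ i, p i • (ρL i ⊗ₖ ρR i))
        = ∑ i : Fin D, ∑ j : Fin D, (if i = j then p i else 0) • (ρL i ⊗ₖ ρR j) := by
      refine Finset.sum_congr rfl fun i _ => ?_
      rw [Finset.sum_eq_single i]
      · simp
      · intro j _ hj; simp [Ne.symm hj]
      · simp
    rw [h1, h2, ← Finset.sum_sub_distrib]
    refine my_psd_sum _ _ fun i _ => ?_
    rw [← Finset.sum_sub_distrib]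
    refine my_psd_sum _ _ fun j _ => ?_
    have : ρL i ⊗ₖ ρR j - (if i = j then p i else 0) • (ρL i ⊗ₖ ρR j)
        = (1 - if i = j then p i else 0) • (ρL i ⊗ₖ ρR j) := by
      rw [sub_smul, one_smul]
    rw [this]
    refine my_psd_smul (my_psd_kron (hρL i) (hρR j)) ?_
    split <;> simp [sub_nonneg, hple i]
end

section
/- Let M = Σ_{i=1}^D α_i (L_i ⊗ R_i) be an operator on H_L ⊗ H_R with Frobenius norm ‖M‖₂ = 1, where L_i act on H_L and R_i act on H_R. Then there exist density matrices τ_L on H_L and τ_R on H_R such that M M† ⪯ D² (τ_L ⊗ τ_R). Consequently, the max mutual information of MM† satisfies I_max(L:R) ≤ 2 log D. -/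
open Matrix ComplexOrder Kronecker

/-- Max mutual information `I_max(L:R)_ρ`: the minimum over product states
`σ_L ⊗ σ_R` of `log min {t : ρ ≤ t σ_L ⊗ σ_R}` (Loewner order). -/
noncomputable def Imax {l r : Type*} [Fintype l] [DecidableEq l]
    [Fintype r] [DecidableEq r] (ρ : Matrix (l × r) (l × r) ℂ) : ℝ :=
  sInf {x : ℝ | ∃ σL : Matrix l l ℂ, ∃ σR : Matrix r r ℂ,
    σL.PosSemidef ∧ σL.trace = 1 ∧ σR.PosSemidef ∧ σR.trace = 1 ∧
    x = Real.log (sInf {t : ℝ | (t • (σL ⊗ₖ σR) - ρ).PosSemidef})}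

namespace MMdaggerAux


/-- sum of squared moduli of the entries -/
noncomputable def nsq {m n : Type*} [Fintype m] [Fintype n] (A : Matrix m n ℂ) : ℝ :=
  ∑ a, ∑ c, Complex.normSq (A a c)

lemma nsq_nonneg {m n : Type*} [Fintype m] [Fintype n] (A : Matrix m n ℂ) : 0 ≤ nsq A :=
  Finset.sum_nonneg fun _ _ => Finset.sum_nonneg fun _ _ => Complex.normSq_nonneg _

lemma eq_zero_of_nsq_eq_zero {m n : Type*} [Fintype m] [Fintype n] {A : Matrix m n ℂ}
    (h : nsq A = 0) : A = 0 := by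
  ext a c
  have h1 : ∀ a ∈ Finset.univ, (∑ c, Complex.normSq (A a c)) = 0 := by
    intro a _
    have := (Finset.sum_eq_zero_iff_of_nonneg (fun a _ =>
      Finset.sum_nonneg fun c _ => Complex.normSq_nonneg (A a c))).1 h
    exact this a (Finset.mem_univ a)
  have h2 := (Finset.sum_eq_zero_iff_of_nonneg (fun c _ => Complex.normSq_nonneg (A a c))).1
    (h1 a (Finset.mem_univ a)) c (Finset.mem_univ c)
  simpa using Complex.normSq_eq_zero.1 h2

lemma nsq_real_smul {m n : Type*} [Fintype m] [Fintype n] (c : ℝ) (A : Matrix m n ℂ) :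
    nsq (((c : ℂ)) • A) = c ^ 2 * nsq A := by
  simp only [nsq, Matrix.smul_apply, smul_eq_mul, Complex.normSq_mul, Complex.normSq_ofReal,
    Finset.mul_sum]
  refine Finset.sum_congr rfl fun a _ => Finset.sum_congr rfl fun b _ => by ring

lemma sum_mulVec' {m n ι : Type*} [Fintype m] [Fintype n] [Fintype ι]
    (A : ι → Matrix m n ℂ) (x : n → ℂ) :
    (∑ i, A i) *ᵥ x = ∑ i, (A i) *ᵥ x := by
  ext j
  simp only [Matrix.mulVec, dotProduct, Finset.sum_apply, Matrix.sum_apply,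
    Finset.sum_mul]
  exact Finset.sum_comm

lemma kron_conjTranspose {l r : Type*} [Fintype l] [Fintype r]
    (A : Matrix l l ℂ) (B : Matrix r r ℂ) : (A ⊗ₖ B)ᴴ = Aᴴ ⊗ₖ Bᴴ := by
  ext ⟨a, b⟩ ⟨c, d⟩
  simp [Matrix.conjTranspose_apply, Matrix.kroneckerMap_apply]

lemma qf_mul_conjTranspose {n : Type*} [Fintype n] (A : Matrix n n ℂ) (x : n → ℂ) :
    star x ⬝ᵥ (A * Aᴴ) *ᵥ x = ((∑ k, Complex.normSq ((Aᴴ *ᵥ x) k) : ℝ) : ℂ) := by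
  have h1 : (A * Aᴴ) *ᵥ x = A *ᵥ (Aᴴ *ᵥ x) := (Matrix.mulVec_mulVec _ _ _).symm
  have h2 : star x ᵥ* A = star (Aᴴ *ᵥ x) := by
    rw [Matrix.star_mulVec, Matrix.conjTranspose_conjTranspose]
  rw [h1, Matrix.dotProduct_mulVec, h2]
  simp only [dotProduct, Pi.star_apply, Complex.star_def, Complex.ofReal_sum]
  exact Finset.sum_congr rfl fun k _ => (Complex.normSq_eq_conj_mul_self).symm ▸ rfl

lemma normSq_sum_le {D : ℕ} (z : Fin D → ℂ) :
    Complex.normSq (∑ j, z j) ≤ (D : ℝ) * ∑ j, Complex.normSq (z j) := by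
  have h1 : ‖∑ j, z j‖ ≤ ∑ j, ‖z j‖ :=
    norm_sum_le _ _
  have h2 : (‖∑ j, z j‖) ^ 2 ≤ (∑ j, ‖z j‖) ^ 2 := by
    have := norm_nonneg (∑ j, z j)
    nlinarith [norm_nonneg (∑ j, z j)]
  have h3 : (∑ j, ‖z j‖) ^ 2 ≤ (D : ℝ) * ∑ j, (‖z j‖) ^ 2 := by
    simpa using sq_sum_le_card_mul_sum_sq (s := (Finset.univ : Finset (Fin D)))
      (f := fun j => ‖z j‖)
  calc Complex.normSq (∑ j, z j) = (‖∑ j, z j‖) ^ 2 := (Complex.sq_norm _).symm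
    _ ≤ (∑ j, ‖z j‖) ^ 2 := h2
    _ ≤ (D : ℝ) * ∑ j, (‖z j‖) ^ 2 := h3
    _ = (D : ℝ) * ∑ j, Complex.normSq (z j) := by
        simp [Complex.sq_norm]

lemma psd_real_smul {n : Type*} [Fintype n] {A : Matrix n n ℂ} (hA : A.PosSemidef)
    {c : ℝ} (hc : 0 ≤ c) : (((c : ℂ)) • A).PosSemidef := by
  refine Matrix.posSemidef_iff_dotProduct_mulVec.mpr ⟨?_, ?_⟩
  · show (((c : ℂ)) • A)ᴴ = _
    rw [Matrix.conjTranspose_smul, hA.1]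
    simp
  · intro x
    rw [Matrix.smul_mulVec, dotProduct_smul, smul_eq_mul]
    exact mul_nonneg (Complex.zero_le_real.2 hc) (hA.dotProduct_mulVec_nonneg x)

lemma psd_sum {n ι : Type*} [Fintype n] [Fintype ι] {A : ι → Matrix n n ℂ}
    (h : ∀ i, (A i).PosSemidef) : (∑ i, A i).PosSemidef := by
  classical
  refine Finset.sum_induction A Matrix.PosSemidef (fun a b ha hb => ha.add hb) ?_ fun i _ => h i
  exact Matrix.PosSemidef.zero

lemma psd_trace_nonneg {n : Type*} [Fintype n] [DecidableEq n] {A : Matrix n n ℂ}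
    (h : A.PosSemidef) : 0 ≤ A.trace := by
  have hd : ∀ i, 0 ≤ A i i := by
    intro i
    have := h.dotProduct_mulVec_nonneg (Pi.single i 1)
    simpa [Matrix.mulVec_single, dotProduct, Pi.single_apply] using this
  exact Finset.sum_nonneg fun i _ => hd i

lemma trace_self_mul_conjT {n : Type*} [Fintype n] (A : Matrix n n ℂ) :
    (A * Aᴴ).trace = ((nsq A : ℝ) : ℂ) := by
  simp only [Matrix.trace, Matrix.diag, Matrix.mul_apply, Matrix.conjTranspose_apply, nsq,
    Complex.ofReal_sum]
  refine Finset.sum_congr rfl fun a _ => Finset.sum_congr rfl fun c _ => ?_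
  rw [← Complex.mul_conj (A a c)]
  rfl

lemma trace_conjT_mul_self {n : Type*} [Fintype n] (A : Matrix n n ℂ) :
    (Aᴴ * A).trace = ((nsq A : ℝ) : ℂ) := by
  rw [← Matrix.trace_mul_comm, trace_self_mul_conjT]

lemma kron_sum_smul_sum_smul {D : ℕ} {lt rt : Type*} [Fintype lt] [Fintype rt]
    (cL cR : Fin D → ℂ) (A : Fin D → Matrix lt lt ℂ) (B : Fin D → Matrix rt rt ℂ) :
    (∑ j, cL j • A j) ⊗ₖ (∑ k, cR k • B k)
      = ∑ j, ∑ k, (cL j * cR k) • (A j ⊗ₖ B k) := by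
  ext ⟨a, b⟩ ⟨c, d⟩
  simp only [Matrix.kroneckerMap_apply, Matrix.sum_apply, Matrix.smul_apply, smul_eq_mul]
  rw [Finset.sum_mul_sum]
  exact Finset.sum_congr rfl fun j _ => Finset.sum_congr rfl fun k _ => by ring



noncomputable def Nv {ι : Type*} [Fintype ι] (y : ι → ℂ) : ℝ := ∑ p, Complex.normSq (y p)

lemma Nv_nonneg {ι : Type*} [Fintype ι] (y : ι → ℂ) : 0 ≤ Nv y :=
  Finset.sum_nonneg fun _ _ => Complex.normSq_nonneg _

lemma dotProduct_sum' {n ι : Type*} [Fintype n] [Fintype ι] (v : n → ℂ) (f : ι → n → ℂ) :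
    v ⬝ᵥ (∑ i, f i) = ∑ i, v ⬝ᵥ f i := by
  simp only [dotProduct, Finset.sum_apply, Finset.mul_sum]
  exact Finset.sum_comm



lemma psd_of_decomp {l r : Type*} [Fintype l] [DecidableEq l] [Fintype r] [DecidableEq r]
    (D : ℕ) (s : Fin D → ℝ) (E : Fin D → Matrix l l ℂ) (F : Fin D → Matrix r r ℂ)
    (M : Matrix (l × r) (l × r) ℂ)
    (hs0 : ∀ j, 0 ≤ s j) (hs1 : ∑ j, s j ^ 2 = 1)
    (hE : ∀ j, nsq (E j) = 1) (hF : ∀ j, nsq (F j) = 1)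
    (hM : M = ∑ j, ((s j : ℝ) : ℂ) • (E j ⊗ₖ F j)) :
    ∃ τL : Matrix l l ℂ, ∃ τR : Matrix r r ℂ,
      τL.PosSemidef ∧ τL.trace = 1 ∧ τR.PosSemidef ∧ τR.trace = 1 ∧
      (((D : ℝ) ^ 2) • (τL ⊗ₖ τR) - M * Mᴴ).PosSemidef := by
  classical
  set S : ℝ := ∑ j, s j with hS
  have hex : ∃ j, s j ≠ 0 := by
    by_contra h
    push_neg at h
    have h0 : (∑ j, s j ^ 2) = 0 := Finset.sum_eq_zero fun j _ => by rw [h j]; ring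
    rw [h0] at hs1
    norm_num at hs1
  obtain ⟨j0, hj0⟩ := hex
  have hSpos : 0 < S := by
    have h1 : 0 < s j0 := lt_of_le_of_ne (hs0 j0) (Ne.symm hj0)
    have h2 : s j0 ≤ S := Finset.single_le_sum (fun j _ => hs0 j) (Finset.mem_univ j0)
    linarith
  have hS2 : S ^ 2 ≤ (D : ℝ) := by
    have h := sq_sum_le_card_mul_sum_sq (s := (Finset.univ : Finset (Fin D))) (f := s)
    rw [hs1, mul_one] at h
    simpa using h
  set τL : Matrix l l ℂ := ∑ j, (((S⁻¹ * s j : ℝ)) : ℂ) • (E j * (E j)ᴴ) with hτL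
  set τR : Matrix r r ℂ := ∑ j, (((S⁻¹ * s j : ℝ)) : ℂ) • (F j * (F j)ᴴ) with hτR
  have hcoef : ∀ j, (0:ℝ) ≤ S⁻¹ * s j := fun j => mul_nonneg (inv_nonneg.2 hSpos.le) (hs0 j)
  have hτLpsd : τL.PosSemidef :=
    psd_sum fun j => psd_real_smul (Matrix.posSemidef_self_mul_conjTranspose _) (hcoef j)
  have hτRpsd : τR.PosSemidef :=
    psd_sum fun j => psd_real_smul (Matrix.posSemidef_self_mul_conjTranspose _) (hcoef j)
  have htrL : τL.trace = 1 := by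
    rw [hτL, Matrix.trace_sum]
    have : ∀ j, ((((S⁻¹ * s j : ℝ)) : ℂ) • (E j * (E j)ᴴ)).trace = ((S⁻¹ * s j : ℝ) : ℂ) := by
      intro j
      rw [Matrix.trace_smul, trace_self_mul_conjT, hE j, smul_eq_mul]
      simp
    rw [Finset.sum_congr rfl fun j _ => this j]
    rw [← Complex.ofReal_sum]
    rw [← Finset.mul_sum, ← hS, inv_mul_cancel₀ hSpos.ne']
    simp
  have htrR : τR.trace = 1 := by
    rw [hτR, Matrix.trace_sum]
    have : ∀ j, ((((S⁻¹ * s j : ℝ)) : ℂ) • (F j * (F j)ᴴ)).trace = ((S⁻¹ * s j : ℝ) : ℂ) := by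
      intro j
      rw [Matrix.trace_smul, trace_self_mul_conjT, hF j, smul_eq_mul]
      simp
    rw [Finset.sum_congr rfl fun j _ => this j]
    rw [← Complex.ofReal_sum]
    rw [← Finset.mul_sum, ← hS, inv_mul_cancel₀ hSpos.ne']
    simp
  refine ⟨τL, τR, hτLpsd, htrL, hτRpsd, htrR, ?_⟩
  -- expansion of the Kronecker product
  have hexp : τL ⊗ₖ τR = ∑ j, ∑ k,
      ((((S⁻¹ * s j) * (S⁻¹ * s k) : ℝ)) : ℂ) • ((E j * (E j)ᴴ) ⊗ₖ (F k * (F k)ᴴ)) := by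
    rw [hτL, hτR, kron_sum_smul_sum_smul]
    refine Finset.sum_congr rfl fun j _ => Finset.sum_congr rfl fun k _ => ?_
    norm_cast
  have hprod : ∀ j k, (E j * (E j)ᴴ) ⊗ₖ (F k * (F k)ᴴ)
      = (E j ⊗ₖ F k) * (E j ⊗ₖ F k)ᴴ := by
    intro j k
    rw [Matrix.mul_kronecker_mul, kron_conjTranspose]
  refine Matrix.posSemidef_iff_dotProduct_mulVec.mpr ⟨?_, ?_⟩
  · -- Hermitian
    have hK : (τL ⊗ₖ τR).IsHermitian := by
      show (τL ⊗ₖ τR)ᴴ = τL ⊗ₖ τR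
      rw [kron_conjTranspose, hτLpsd.1, hτRpsd.1]
    have hsm : (((D : ℝ) ^ 2) • (τL ⊗ₖ τR)).IsHermitian := by
      show (((D : ℝ) ^ 2) • (τL ⊗ₖ τR))ᴴ = _
      rw [Matrix.conjTranspose_smul, hK]
      simp
    exact hsm.sub (Matrix.isHermitian_mul_conjTranspose_self M)
  · intro x
    set w : Fin D → Fin D → ((l × r) → ℂ) := fun j k => ((E j ⊗ₖ F k)ᴴ) *ᵥ x with hw
    -- quadratic form of the kronecker part
    have hq1 : star x ⬝ᵥ (τL ⊗ₖ τR) *ᵥ x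
        = ((∑ j, ∑ k, (S⁻¹ * s j) * (S⁻¹ * s k) * Nv (w j k) : ℝ) : ℂ) := by
      rw [hexp, sum_mulVec', dotProduct_sum']
      rw [Complex.ofReal_sum]
      refine Finset.sum_congr rfl fun j _ => ?_
      rw [sum_mulVec', dotProduct_sum', Complex.ofReal_sum]
      refine Finset.sum_congr rfl fun k _ => ?_
      rw [Matrix.smul_mulVec, dotProduct_smul, hprod j k,
        qf_mul_conjTranspose, smul_eq_mul]
      have hww : (∑ p, Complex.normSq (((E j ⊗ₖ F k)ᴴ *ᵥ x) p)) = Nv (w j k) := rfl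
      rw [hww]
      norm_cast
    have hq2 : star x ⬝ᵥ (M * Mᴴ) *ᵥ x = ((Nv (Mᴴ *ᵥ x) : ℝ) : ℂ) :=
      qf_mul_conjTranspose M x
    -- M†x as a sum
    have hMv : Mᴴ *ᵥ x = ∑ j, ((s j : ℝ) : ℂ) • (w j j) := by
      have hMH : Mᴴ = ∑ j, ((s j : ℝ) : ℂ) • (E j ⊗ₖ F j)ᴴ := by
        rw [hM, Matrix.conjTranspose_sum]
        refine Finset.sum_congr rfl fun j _ => ?_
        rw [Matrix.conjTranspose_smul]
        simp
      rw [hMH, sum_mulVec']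
      exact Finset.sum_congr rfl fun j _ => Matrix.smul_mulVec _ _ _
    -- real estimates
    have key : Nv (Mᴴ *ᵥ x) ≤ (D : ℝ) * ∑ j, s j ^ 2 * Nv (w j j) := by
      rw [hMv]
      have hp : ∀ p, Complex.normSq ((∑ j, ((s j : ℝ) : ℂ) • (w j j)) p)
          ≤ (D : ℝ) * ∑ j, s j ^ 2 * Complex.normSq (w j j p) := by
        intro p
        have h0 : (∑ j, ((s j : ℝ) : ℂ) • (w j j)) p
            = ∑ j, ((s j : ℝ) : ℂ) * (w j j p) := by
          simp [Finset.sum_apply]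
        rw [h0]
        refine le_trans (normSq_sum_le _) ?_
        refine mul_le_mul_of_nonneg_left (le_of_eq ?_) (Nat.cast_nonneg D)
        refine Finset.sum_congr rfl fun j _ => ?_
        rw [Complex.normSq_mul, Complex.normSq_ofReal]
        ring
      calc Nv (∑ j, ((s j : ℝ) : ℂ) • (w j j))
          = ∑ p, Complex.normSq ((∑ j, ((s j : ℝ) : ℂ) • (w j j)) p) := rfl
        _ ≤ ∑ p : l × r, ((D : ℝ) * ∑ j, s j ^ 2 * Complex.normSq (w j j p)) :=
            Finset.sum_le_sum fun p _ => hp p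
        _ = (D : ℝ) * ∑ j, s j ^ 2 * Nv (w j j) := by
            rw [← Finset.mul_sum]
            congr 1
            rw [Finset.sum_comm]
            refine Finset.sum_congr rfl fun j _ => ?_
            rw [Nv, Finset.mul_sum]
    have diag : ∑ j, s j ^ 2 * Nv (w j j) ≤ ∑ j, ∑ k, s j * s k * Nv (w j k) := by
      refine Finset.sum_le_sum fun j _ => ?_
      have h1 : s j ^ 2 * Nv (w j j) = s j * s j * Nv (w j j) := by ring
      rw [h1]
      exact Finset.single_le_sum (f := fun k => s j * s k * Nv (w j k))
        (fun k _ => mul_nonneg (mul_nonneg (hs0 j) (hs0 k)) (Nv_nonneg _))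
        (Finset.mem_univ j)
    set T : ℝ := ∑ j, ∑ k, s j * s k * Nv (w j k) with hT
    have hT0 : 0 ≤ T :=
      Finset.sum_nonneg fun j _ => Finset.sum_nonneg fun k _ =>
        mul_nonneg (mul_nonneg (hs0 j) (hs0 k)) (Nv_nonneg _)
    have hre : ∑ j, ∑ k, (S⁻¹ * s j) * (S⁻¹ * s k) * Nv (w j k) = S⁻¹ * S⁻¹ * T := by
      rw [hT, Finset.mul_sum]
      refine Finset.sum_congr rfl fun j _ => ?_
      rw [Finset.mul_sum]
      refine Finset.sum_congr rfl fun k _ => by ring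
    have hDT : (D : ℝ) * T ≤ (D : ℝ) ^ 2 * (S⁻¹ * S⁻¹ * T) := by
      have hu : S * S⁻¹ = 1 := mul_inv_cancel₀ hSpos.ne'
      have hupos : 0 < S⁻¹ := inv_pos.2 hSpos
      have h1 : S ^ 2 * (S⁻¹ * S⁻¹) = 1 := by
        rw [sq]
        field_simp
      have h2 : (1 : ℝ) ≤ (D : ℝ) * (S⁻¹ * S⁻¹) := by
        calc (1:ℝ) = S ^ 2 * (S⁻¹ * S⁻¹) := h1.symm
          _ ≤ (D : ℝ) * (S⁻¹ * S⁻¹) :=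
              mul_le_mul_of_nonneg_right hS2 (mul_nonneg hupos.le hupos.le)
      calc (D : ℝ) * T = (D : ℝ) * T * 1 := by ring
        _ ≤ (D : ℝ) * T * ((D : ℝ) * (S⁻¹ * S⁻¹)) :=
            mul_le_mul_of_nonneg_left h2 (mul_nonneg (Nat.cast_nonneg D) hT0)
        _ = (D : ℝ) ^ 2 * (S⁻¹ * S⁻¹ * T) := by ring
    have hfinal : Nv (Mᴴ *ᵥ x)
        ≤ (D : ℝ) ^ 2 * ∑ j, ∑ k, (S⁻¹ * s j) * (S⁻¹ * s k) * Nv (w j k) := by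
      rw [hre]
      calc Nv (Mᴴ *ᵥ x) ≤ (D : ℝ) * ∑ j, s j ^ 2 * Nv (w j j) := key
        _ ≤ (D : ℝ) * T := by
            exact mul_le_mul_of_nonneg_left diag (Nat.cast_nonneg D)
        _ ≤ (D : ℝ) ^ 2 * (S⁻¹ * S⁻¹ * T) := hDT
    -- put it together
    have hcomb : star x ⬝ᵥ ((((D : ℝ) ^ 2) • (τL ⊗ₖ τR) - M * Mᴴ) *ᵥ x)
        = ((((D : ℝ) ^ 2 * ∑ j, ∑ k, (S⁻¹ * s j) * (S⁻¹ * s k) * Nv (w j k))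
            - Nv (Mᴴ *ᵥ x) : ℝ) : ℂ) := by
      rw [Matrix.sub_mulVec, dotProduct_sub, Matrix.smul_mulVec,
        dotProduct_smul, hq1, hq2]
      push_cast [Complex.real_smul]
      ring
    rw [hcomb]
    exact Complex.zero_le_real.2 (by linarith)



lemma trace_conjT_mul {m n : Type*} [Fintype m] [Fintype n] (A B : Matrix m n ℂ) :
    (Aᴴ * B).trace = ∑ q, ∑ p, (starRingEnd ℂ) (A p q) * B p q := by
  simp [Matrix.trace, Matrix.mul_apply, Matrix.conjTranspose_apply, Matrix.diag]

lemma nsq_stdBasis {m : Type*} [Fintype m] [DecidableEq m] (a₀ : m) :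
    nsq (Matrix.single a₀ a₀ (1 : ℂ)) = 1 := by
  simp [nsq, Matrix.single, Matrix.of_apply, apply_ite Complex.normSq, ite_and,
    Finset.sum_ite_eq]

lemma exists_decomp {l r : Type*} [Fintype l] [DecidableEq l] [Fintype r] [DecidableEq r]
    [Nonempty l] [Nonempty r]
    (D : ℕ) (α : Fin D → ℂ) (L : Fin D → Matrix l l ℂ) (R : Fin D → Matrix r r ℂ)
    (M : Matrix (l × r) (l × r) ℂ)
    (hM : M = ∑ i, α i • (L i ⊗ₖ R i))
    (hM2 : (Mᴴ * M).trace = 1) :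
    ∃ (s : Fin D → ℝ) (E : Fin D → Matrix l l ℂ) (F : Fin D → Matrix r r ℂ),
      (∀ j, 0 ≤ s j) ∧ (∑ j, s j ^ 2 = 1) ∧
      (∀ j, nsq (E j) = 1) ∧ (∀ j, nsq (F j) = 1) ∧
      M = ∑ j, ((s j : ℝ) : ℂ) • (E j ⊗ₖ F j) := by
  classical
  letI : WellFoundedLT (Fin D) := Finite.to_wellFoundedLT
  set Leq : WithLp 2 ((r × r) → ℂ) ≃ₗ[ℂ] ((r × r) → ℂ) :=
    WithLp.linearEquiv 2 ℂ ((r × r) → ℂ) with hLeq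
  set v : Fin D → EuclideanSpace ℂ (r × r) := fun i => Leq.symm (fun p => R i p.1 p.2) with hv
  set g : Fin D → EuclideanSpace ℂ (r × r) := InnerProductSpace.gramSchmidt ℂ v with hg
  set Gf : Fin D → ((r × r) → ℂ) := fun j => Leq (g j) with hGf
  set Gm : Fin D → Matrix r r ℂ := fun j => Matrix.of fun b d => Gf j (b, d) with hGm
  have hspan : ∀ i, ∃ c : Fin D → ℂ, ∑ j, c j • g j = v i := by
    intro i
    have h1 : v i ∈ Submodule.span ℂ (Set.range (InnerProductSpace.gramSchmidt ℂ v)) := by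
      rw [InnerProductSpace.span_gramSchmidt]
      exact Submodule.subset_span ⟨i, rfl⟩
    exact (Submodule.mem_span_range_iff_exists_fun ℂ).mp h1
  choose c hc using hspan
  have hR : ∀ i b d, R i b d = ∑ j, c i j * Gm j b d := by
    intro i b d
    have h2 := congrArg Leq (hc i)
    rw [map_sum] at h2
    simp_rw [_root_.map_smul] at h2
    rw [LinearEquiv.apply_symm_apply] at h2
    have h3 := congrFun h2 (b, d)
    simpa [Finset.sum_apply, hGm] using h3.symm
  have horth : ∀ j k, j ≠ k → (∑ p : r × r, (starRingEnd ℂ) (Gf j p) * Gf k p) = 0 := by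
    intro j k hjk
    have h1 : (inner ℂ (g j) (g k) : ℂ) = 0 := InnerProductSpace.gramSchmidt_orthogonal ℂ v hjk
    rw [PiLp.inner_apply] at h1
    simpa [RCLike.inner_apply, mul_comm, hGf, hLeq, WithLp.linearEquiv_apply] using h1
  set L' : Fin D → Matrix l l ℂ := fun j => ∑ i, (α i * c i j) • L i with hL'
  have hMLG : M = ∑ j, (L' j) ⊗ₖ (Gm j) := by
    ext ⟨a, b⟩ ⟨c0, d⟩
    rw [hM]
    simp only [Matrix.sum_apply, Matrix.smul_apply, Matrix.kroneckerMap_apply, smul_eq_mul]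
    calc ∑ i, α i * (L i a c0 * R i b d)
        = ∑ i, ∑ j, α i * c i j * L i a c0 * Gm j b d := by
          refine Finset.sum_congr rfl fun i _ => ?_
          rw [hR i b d, Finset.mul_sum, Finset.mul_sum]
          exact Finset.sum_congr rfl fun j _ => by ring
      _ = ∑ j, ∑ i, α i * c i j * L i a c0 * Gm j b d := Finset.sum_comm
      _ = ∑ j, (L' j) a c0 * Gm j b d := by
          refine Finset.sum_congr rfl fun j _ => ?_
          rw [hL']
          simp only [Matrix.sum_apply, Matrix.smul_apply, smul_eq_mul]
          rw [Finset.sum_mul]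
  have horthM : ∀ j k, j ≠ k → ((Gm j)ᴴ * (Gm k)).trace = 0 := by
    intro j k hjk
    have h2 : ∑ x : r × r, (starRingEnd ℂ) (Gf j x) * Gf k x
        = ∑ p, ∑ q, (starRingEnd ℂ) (Gm j p q) * Gm k p q := Fintype.sum_prod_type _
    rw [trace_conjT_mul, Finset.sum_comm, ← h2]
    exact horth j k hjk
  have hMtrace : (Mᴴ * M).trace = ∑ j, ((nsq (L' j) * nsq (Gm j) : ℝ) : ℂ) := by
    rw [hMLG, Matrix.conjTranspose_sum, Finset.sum_mul_sum, Matrix.trace_sum]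
    refine Finset.sum_congr rfl fun j _ => ?_
    rw [Matrix.trace_sum]
    rw [Finset.sum_eq_single_of_mem j (Finset.mem_univ j)]
    · rw [kron_conjTranspose, ← Matrix.mul_kronecker_mul, Matrix.trace_kronecker,
        trace_conjT_mul_self, trace_conjT_mul_self]
      norm_cast
    · intro k _ hkj
      rw [kron_conjTranspose, ← Matrix.mul_kronecker_mul, Matrix.trace_kronecker,
        horthM j k (Ne.symm hkj)]
      · ring
  have hsum1 : ∑ j, nsq (L' j) * nsq (Gm j) = 1 := by
    have h1 : ((∑ j, nsq (L' j) * nsq (Gm j) : ℝ) : ℂ) = ((1 : ℝ) : ℂ) := by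
      rw [Complex.ofReal_sum]
      rw [← hMtrace, hM2]
      norm_num
    exact_mod_cast h1
  set s : Fin D → ℝ := fun j => Real.sqrt (nsq (L' j) * nsq (Gm j)) with hs
  have hs0 : ∀ j, 0 ≤ s j := fun j => Real.sqrt_nonneg _
  have hssq : ∀ j, s j ^ 2 = nsq (L' j) * nsq (Gm j) := fun j =>
    Real.sq_sqrt (mul_nonneg (nsq_nonneg _) (nsq_nonneg _))
  have hs1 : ∑ j, s j ^ 2 = 1 := by
    rw [Finset.sum_congr rfl fun j _ => hssq j]
    exact hsum1
  obtain ⟨a₀⟩ := (inferInstance : Nonempty l)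
  obtain ⟨b₀⟩ := (inferInstance : Nonempty r)
  set E : Fin D → Matrix l l ℂ := fun j =>
    if s j = 0 then Matrix.single a₀ a₀ (1 : ℂ)
    else (((Real.sqrt (nsq (L' j)))⁻¹ : ℝ) : ℂ) • L' j with hE
  set F : Fin D → Matrix r r ℂ := fun j =>
    if s j = 0 then Matrix.single b₀ b₀ (1 : ℂ)
    else (((Real.sqrt (nsq (Gm j)))⁻¹ : ℝ) : ℂ) • Gm j with hF
  have hnz : ∀ j, s j ≠ 0 → nsq (L' j) ≠ 0 ∧ nsq (Gm j) ≠ 0 := by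
    intro j hj
    constructor
    · intro h0
      exact hj (by simp [hs, h0])
    · intro h0
      exact hj (by simp [hs, h0])
  have hEnorm : ∀ j, nsq (E j) = 1 := by
    intro j
    by_cases hj : s j = 0
    · simp only [hE, if_pos hj]
      exact nsq_stdBasis a₀
    · simp only [hE, if_neg hj]
      rw [nsq_real_smul, inv_pow, Real.sq_sqrt (nsq_nonneg _),
        inv_mul_cancel₀ (hnz j hj).1]
  have hFnorm : ∀ j, nsq (F j) = 1 := by
    intro j
    by_cases hj : s j = 0
    · simp only [hF, if_pos hj]
      exact nsq_stdBasis b₀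
    · simp only [hF, if_neg hj]
      rw [nsq_real_smul, inv_pow, Real.sq_sqrt (nsq_nonneg _),
        inv_mul_cancel₀ (hnz j hj).2]
  refine ⟨s, E, F, hs0, hs1, hEnorm, hFnorm, ?_⟩
  rw [hMLG]
  refine Finset.sum_congr rfl fun j _ => ?_
  by_cases hj : s j = 0
  · have hprod0 : nsq (L' j) * nsq (Gm j) = 0 := by
      have h1 : Real.sqrt (nsq (L' j) * nsq (Gm j)) = 0 := hj
      have h2 := Real.sqrt_eq_zero'.mp h1
      exact le_antisymm h2 (mul_nonneg (nsq_nonneg _) (nsq_nonneg _))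
    have hz : (L' j) ⊗ₖ (Gm j) = 0 := by
      rcases mul_eq_zero.mp hprod0 with h | h
      · rw [eq_zero_of_nsq_eq_zero h, Matrix.zero_kronecker]
      · rw [eq_zero_of_nsq_eq_zero h, Matrix.kronecker_zero]
    rw [hz, hj]
    simp
  · have h1 := (hnz j hj).1
    have h2 := (hnz j hj).2
    have hsl : Real.sqrt (nsq (L' j)) ≠ 0 :=
      Real.sqrt_ne_zero'.mpr (lt_of_le_of_ne (nsq_nonneg _) (Ne.symm h1))
    have hsg : Real.sqrt (nsq (Gm j)) ≠ 0 :=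
      Real.sqrt_ne_zero'.mpr (lt_of_le_of_ne (nsq_nonneg _) (Ne.symm h2))
    have hEj : E j = (((Real.sqrt (nsq (L' j)))⁻¹ : ℝ) : ℂ) • L' j := by
      simp only [hE, if_neg hj]
    have hFj : F j = (((Real.sqrt (nsq (Gm j)))⁻¹ : ℝ) : ℂ) • Gm j := by
      simp only [hF, if_neg hj]
    rw [hEj, hFj, Matrix.smul_kronecker, Matrix.kronecker_smul, smul_smul, smul_smul]
    have hcoef : ((s j : ℝ) : ℂ) * (((Real.sqrt (nsq (L' j)))⁻¹ : ℝ) : ℂ)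
        * (((Real.sqrt (nsq (Gm j)))⁻¹ : ℝ) : ℂ) = 1 := by
      have hsj : s j = Real.sqrt (nsq (L' j)) * Real.sqrt (nsq (Gm j)) :=
        Real.sqrt_mul (nsq_nonneg _) _
      rw [hsj]
      push_cast
      field_simp
    rw [hcoef, one_smul]


lemma one_le_of_mem {l r : Type*} [Fintype l] [DecidableEq l] [Fintype r] [DecidableEq r]
    {σL : Matrix l l ℂ} {σR : Matrix r r ℂ} (htL : σL.trace = 1) (htR : σR.trace = 1)
    {ρ : Matrix (l × r) (l × r) ℂ} (hρ : ρ.trace = 1) {t : ℝ}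
    (ht : (t • (σL ⊗ₖ σR) - ρ).PosSemidef) : 1 ≤ t := by
  have h0 := psd_trace_nonneg ht
  rw [Matrix.trace_sub, Matrix.trace_smul, Matrix.trace_kronecker, htL, htR, hρ] at h0
  have h1 : (0 : ℂ) ≤ ((t - 1 : ℝ) : ℂ) := by
    have : t • ((1 : ℂ) * 1) - 1 = ((t - 1 : ℝ) : ℂ) := by
      push_cast [Complex.real_smul]
      ring
    rwa [this] at h0
  have h2 : (0 : ℝ) ≤ t - 1 := Complex.zero_le_real.mp h1
  linarith

end MMdaggerAux

open MMdaggerAux in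
/-- if `M = Σ_{i=1}^D α_i (L_i ⊗ R_i)` with `‖M‖₂ = 1`, then
`M Mᴴ ⪯ D² (τ_L ⊗ τ_R)` for some states `τ_L, τ_R`; consequently
`I_max(L:R)_{MMᴴ} ≤ 2 log D`. -/
theorem MMdagger_le_product {l r : Type*} [Fintype l] [DecidableEq l]
    [Fintype r] [DecidableEq r]
    (D : ℕ) (hD : 0 < D) (α : Fin D → ℂ)
    (L : Fin D → Matrix l l ℂ) (R : Fin D → Matrix r r ℂ)
    (M : Matrix (l × r) (l × r) ℂ)
    (hM : M = ∑ i, α i • (L i ⊗ₖ R i))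
    (hM2 : (Mᴴ * M).trace = 1) :
    (∃ τL : Matrix l l ℂ, ∃ τR : Matrix r r ℂ,
      τL.PosSemidef ∧ τL.trace = 1 ∧ τR.PosSemidef ∧ τR.trace = 1 ∧
      (((D : ℝ) ^ 2) • (τL ⊗ₖ τR) - M * Mᴴ).PosSemidef) ∧
    Imax (M * Mᴴ) ≤ 2 * Real.log D := by
  have hne : Nonempty (l × r) := by
    by_contra h
    rw [not_nonempty_iff] at h
    have h0 : (Mᴴ * M).trace = 0 := by
      rw [Matrix.trace, Finset.univ_eq_empty, Finset.sum_empty]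
    rw [h0] at hM2
    exact one_ne_zero hM2.symm
  have hl : Nonempty l := ⟨hne.some.1⟩
  have hr : Nonempty r := ⟨hne.some.2⟩
  obtain ⟨s, E, F, hs0, hs1, hE, hF, hM'⟩ := exists_decomp D α L R M hM hM2
  obtain ⟨τL, τR, h1, h2, h3, h4, h5⟩ := psd_of_decomp D s E F M hs0 hs1 hE hF hM'
  have hρtr : (M * Mᴴ).trace = 1 := by rw [Matrix.trace_mul_comm]; exact hM2
  refine ⟨⟨τL, τR, h1, h2, h3, h4, h5⟩, ?_⟩
  set T : Set ℝ := {t : ℝ | (t • (τL ⊗ₖ τR) - M * Mᴴ).PosSemidef} with hT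
  have hmemD : ((D : ℝ) ^ 2) ∈ T := h5
  have hTlb : ∀ t ∈ T, (1 : ℝ) ≤ t := fun t ht => one_le_of_mem h2 h4 hρtr ht
  have hsInfT_le : sInf T ≤ (D : ℝ) ^ 2 := csInf_le ⟨1, hTlb⟩ hmemD
  have hsInfT_ge : (1 : ℝ) ≤ sInf T := le_csInf ⟨_, hmemD⟩ hTlb
  have hlog : Real.log (sInf T) ≤ 2 * Real.log D := by
    have hD2 : (0 : ℝ) < (D : ℝ) ^ 2 := by positivity
    calc Real.log (sInf T) ≤ Real.log ((D : ℝ) ^ 2) :=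
          (Real.log_le_log_iff (by linarith) hD2).mpr hsInfT_le
      _ = 2 * Real.log D := by rw [Real.log_pow]; norm_num
  have hImax_le : Imax (M * Mᴴ) ≤ Real.log (sInf T) := by
    apply csInf_le
    · refine ⟨0, fun x hx => ?_⟩
      obtain ⟨σL, σR, _, htL, _, htR, rfl⟩ := hx
      rcases Set.eq_empty_or_nonempty
          {t : ℝ | (t • (σL ⊗ₖ σR) - M * Mᴴ).PosSemidef} with h | h
      · rw [h, Real.sInf_empty, Real.log_zero]
      · exact Real.log_nonneg (le_csInf h fun t ht => one_le_of_mem htL htR hρtr ht)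
    · exact ⟨τL, τR, h1, h2, h3, h4, rfl⟩
  linarith
end

section
/- (Gentle measurement) Let ρ be a positive semidefinite operator with Tr ρ ≤ 1, and Π an orthogonal projector. Then ‖ρ − ΠρΠ‖₁ ≤ 2√(Tr((1−Π)ρ)). -/
open Matrix ComplexOrder

/-- Trace norm `‖A‖₁ = Tr √(AᴴA)`. -/
noncomputable def traceNorm {n : Type*} [Fintype n] [DecidableEq n]
    (A : Matrix n n ℂ) : ℝ :=
  ((Matrix.posSemidef_conjTranspose_mul_self A).1.eigenvectorUnitary.1 *
    diagonal (((↑) : ℝ → ℂ) ∘ Real.sqrt ∘ (Matrix.posSemidef_conjTranspose_mul_self A).1.eigenvalues) *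
    (star (Matrix.posSemidef_conjTranspose_mul_self A).1.eigenvectorUnitary : Matrix n n ℂ)).trace.re

section Aux

set_option linter.unusedSectionVars false

variable {n : Type*} [Fintype n] [DecidableEq n]

noncomputable def Matrix.PosSemidef.sqrt {A : Matrix n n ℂ} (hA : A.PosSemidef) : Matrix n n ℂ :=
  hA.1.eigenvectorUnitary.1 * diagonal (((↑) : ℝ → ℂ) ∘ Real.sqrt ∘ hA.1.eigenvalues) *
    (star hA.1.eigenvectorUnitary : Matrix n n ℂ)

lemma Matrix.PosSemidef.posSemidef_sqrt {A : Matrix n n ℂ} (hA : A.PosSemidef) :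
    hA.sqrt.PosSemidef := by
  unfold Matrix.PosSemidef.sqrt
  have hD : (diagonal (((↑) : ℝ → ℂ) ∘ Real.sqrt ∘ hA.1.eigenvalues)).PosSemidef := by
    rw [posSemidef_diagonal_iff]; intro i; simp [Complex.zero_le_real, Real.sqrt_nonneg]
  have := hD.mul_mul_conjTranspose_same (hA.1.eigenvectorUnitary : Matrix n n ℂ)
  simpa [Matrix.star_eq_conjTranspose] using this

lemma Matrix.PosSemidef.sqrt_mul_self {A : Matrix n n ℂ} (hA : A.PosSemidef) :
    hA.sqrt * hA.sqrt = A := by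
  unfold Matrix.PosSemidef.sqrt
  conv_rhs => rw [hA.1.spectral_theorem, Unitary.conjStarAlgAut_apply]
  have hU := Unitary.coe_star_mul_self hA.1.eigenvectorUnitary
  rw [show ∀ a b c d e f : Matrix n n ℂ, a * b * c * (d * e * f) = a * (b * ((c * d) * e)) * f from
    fun _ _ _ _ _ _ => by simp only [Matrix.mul_assoc], hU, Matrix.one_mul, diagonal_mul_diagonal]
  congr 3
  funext i
  simp only [Function.comp_apply]
  rw [← Complex.ofReal_mul, Real.mul_self_sqrt (hA.eigenvalues_nonneg i)]
  rfl

lemma EuclideanSpace.inner_piLp_equiv_symm (x y : n → ℂ) :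
    inner ℂ ((WithLp.equiv 2 (n → ℂ)).symm x) ((WithLp.equiv 2 (n → ℂ)).symm y) = star x ⬝ᵥ y := by
  rw [dotProduct_comm]; rfl

lemma WithLp.equiv_symm_pi_apply (x : n → ℂ) (i : n) :
    ((WithLp.equiv 2 (n → ℂ)).symm x) i = x i := rfl

lemma frob_re (X : Matrix n n ℂ) :
    (Xᴴ * X).trace.re = ∑ j, ∑ k, ‖X k j‖ ^ 2 := by
  simp only [Matrix.trace, Matrix.diag, Matrix.mul_apply, Matrix.conjTranspose_apply]
  rw [Complex.re_sum]
  congr 1; ext j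
  rw [Complex.re_sum]
  congr 1; ext k
  rw [RCLike.star_def, RCLike.conj_mul]
  norm_cast

lemma frob_nonneg (X : Matrix n n ℂ) : 0 ≤ (Xᴴ * X).trace.re := by
  rw [frob_re]; positivity

lemma trace_sqrt_re {A : Matrix n n ℂ} (hA : A.PosSemidef) :
    hA.sqrt.trace.re = ∑ i, Real.sqrt (hA.1.eigenvalues i) := by
  rw [Matrix.PosSemidef.sqrt, Matrix.trace_mul_cycle,
    (Unitary.mem_iff.mp hA.1.eigenvectorUnitary.2).1, Matrix.one_mul, Matrix.trace_diagonal]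
  rw [Complex.re_sum]
  simp

lemma bessel_frob {ι : Type*} {w : ι → EuclideanSpace ℂ n} (hw : Orthonormal ℂ w)
    (s : Finset ι) (X : Matrix n n ℂ) :
    ∑ i ∈ s, ‖(WithLp.equiv 2 (n → ℂ)).symm (X *ᵥ w i)‖ ^ 2 ≤ (Xᴴ * X).trace.re := by
  have key : ∀ i, ‖(WithLp.equiv 2 (n → ℂ)).symm (X *ᵥ w i)‖ ^ 2
      = ∑ j, ‖(inner ℂ ((WithLp.equiv 2 (n → ℂ)).symm fun k => (starRingEnd ℂ) (X j k)) (w i) : ℂ)‖ ^ 2 := by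
    intro i
    rw [EuclideanSpace.norm_eq, Real.sq_sqrt (by positivity)]
    congr 1; ext j
    congr 2
    have : w i = (WithLp.equiv 2 (n → ℂ)).symm (WithLp.equiv 2 (n → ℂ) (w i)) := rfl
    rw [this, EuclideanSpace.inner_piLp_equiv_symm]
    simp [Matrix.mulVec, dotProduct, WithLp.equiv_symm_pi_apply]
  calc ∑ i ∈ s, ‖(WithLp.equiv 2 (n → ℂ)).symm (X *ᵥ w i)‖ ^ 2
      = ∑ j, ∑ i ∈ s, ‖(inner ℂ ((WithLp.equiv 2 (n → ℂ)).symm fun k => (starRingEnd ℂ) (X j k)) (w i) : ℂ)‖ ^ 2 := by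
        simp_rw [key]; rw [Finset.sum_comm]
    _ ≤ ∑ j, ‖(WithLp.equiv 2 (n → ℂ)).symm fun k => (starRingEnd ℂ) (X j k)‖ ^ 2 := by
        apply Finset.sum_le_sum
        intro j _
        simpa only [norm_inner_symm] using hw.sum_inner_products_le
          ((WithLp.equiv 2 (n → ℂ)).symm fun k => (starRingEnd ℂ) (X j k)) (s := s)
    _ = (Xᴴ * X).trace.re := by
        rw [frob_re, Finset.sum_comm]
        congr 1; ext j
        rw [EuclideanSpace.norm_eq, Real.sq_sqrt (by positivity)]
        congr 1; ext k
        simp [WithLp.equiv_symm_pi_apply]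

lemma cs_sum {ι : Type*} (s : Finset ι) (f g : ι → ℝ) (hf : ∀ i ∈ s, 0 ≤ f i)
    (hg : ∀ i ∈ s, 0 ≤ g i) :
    ∑ i ∈ s, f i * g i ≤ Real.sqrt (∑ i ∈ s, f i ^ 2) * Real.sqrt (∑ i ∈ s, g i ^ 2) := by
  have h0 : 0 ≤ ∑ i ∈ s, f i * g i := Finset.sum_nonneg fun i hi => mul_nonneg (hf i hi) (hg i hi)
  rw [← Real.sqrt_mul_self h0, ← Real.sqrt_mul (Finset.sum_nonneg fun i _ => sq_nonneg (f i))]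
  apply Real.sqrt_le_sqrt
  simpa [pow_two] using Finset.sum_mul_sq_le_sq_mul_sq s f g

lemma traceNorm_two_mul_le (X₁ Y₁ X₂ Y₂ : Matrix n n ℂ) :
    traceNorm (X₁ * Y₁ + X₂ * Y₂) ≤
      Real.sqrt ((X₁ᴴ * X₁).trace.re) * Real.sqrt ((Y₁ᴴ * Y₁).trace.re)
      + Real.sqrt ((X₂ᴴ * X₂).trace.re) * Real.sqrt ((Y₂ᴴ * Y₂).trace.re) := by
  classical
  set A := X₁ * Y₁ + X₂ * Y₂ with hAdef
  have hH : (Aᴴ * A).PosSemidef := Matrix.posSemidef_conjTranspose_mul_self A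
  set h : (Aᴴ * A).IsHermitian := hH.1 with hhdef
  set lam := h.eigenvalues with hlamdef
  set v : n → EuclideanSpace ℂ n := fun i => h.eigenvectorBasis i with hvdef
  set σ : n → ℝ := fun i => Real.sqrt (lam i) with hσdef
  have hlam0 : ∀ i, 0 ≤ lam i := hH.eigenvalues_nonneg
  have hσ0 : ∀ i, 0 ≤ σ i := fun i => Real.sqrt_nonneg _
  have htr : traceNorm A = ∑ i, σ i := trace_sqrt_re hH
  have key : ∀ i j, star (A *ᵥ v i) ⬝ᵥ (A *ᵥ v j) = if i = j then (lam j : ℂ) else 0 := by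
    intro i j
    rw [Matrix.star_mulVec, Matrix.dotProduct_mulVec, Matrix.vecMul_vecMul,
      ← Matrix.dotProduct_mulVec]
    have he : (Aᴴ * A) *ᵥ v j = (lam j : ℝ) • v j := h.mulVec_eigenvectorBasis j
    rw [he]
    have hon := orthonormal_iff_ite.mp (h.eigenvectorBasis.orthonormal) i j
    have hdp : star (v i) ⬝ᵥ (v j : n → ℂ) = if i = j then 1 else 0 := by
      rw [← hon, EuclideanSpace.inner_eq_star_dotProduct, dotProduct_comm]
    rw [dotProduct_smul, hdp]
    split <;> simp
  set s : Finset n := Finset.univ.filter (fun i => 0 < σ i) with hsdef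
  set ue : n → (n → ℂ) := fun i => ((σ i)⁻¹ : ℂ) • (A *ᵥ v i) with huedef
  have hsum : ∑ i, σ i = ∑ i ∈ s, σ i := by
    rw [hsdef]
    rw [Finset.sum_filter_of_ne]
    intro i _ hne
    exact lt_of_le_of_ne (hσ0 i) (Ne.symm hne)
  have hlam_s : ∀ i ∈ s, lam i = σ i ^ 2 := by
    intro i hi
    rw [hσdef]
    simp only [Real.sq_sqrt (hlam0 i)]
  have hσne : ∀ i ∈ s, (σ i : ℂ) ≠ 0 := by
    intro i hi
    exact_mod_cast ne_of_gt (Finset.mem_filter.mp hi).2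
  -- representation of σ i
  have hrep : ∀ i ∈ s, (σ i : ℂ) = star (ue i) ⬝ᵥ (A *ᵥ v i) := by
    intro i hi
    rw [huedef]
    simp only [star_smul, smul_dotProduct, key i i, if_pos rfl]
    rw [hlam_s i hi]
    have : (starRingEnd ℂ) ((σ i : ℂ)⁻¹) = ((σ i : ℂ))⁻¹ := by
      rw [← Complex.ofReal_inv]; exact Complex.conj_ofReal _
    rw [star_inv₀, RCLike.star_def, Complex.conj_ofReal]
    push_cast
    rw [smul_eq_mul, sq, inv_mul_cancel_left₀ (hσne i hi)]
  -- adjoint move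
  have hadj : ∀ (X Y : Matrix n n ℂ) (u w : n → ℂ),
      star u ⬝ᵥ ((X * Y) *ᵥ w) = star (Xᴴ *ᵥ u) ⬝ᵥ (Y *ᵥ w) := by
    intro X Y u w
    rw [Matrix.star_mulVec, Matrix.conjTranspose_conjTranspose, ← Matrix.mulVec_mulVec,
      Matrix.dotProduct_mulVec]
  set e := WithLp.equiv 2 (n → ℂ) with hedef
  set a₁ : n → ℝ := fun i => ‖e.symm (X₁ᴴ *ᵥ ue i)‖ with ha1
  set b₁ : n → ℝ := fun i => ‖e.symm (Y₁ *ᵥ v i)‖ with hb1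
  set a₂ : n → ℝ := fun i => ‖e.symm (X₂ᴴ *ᵥ ue i)‖ with ha2
  set b₂ : n → ℝ := fun i => ‖e.symm (Y₂ *ᵥ v i)‖ with hb2
  have step : ∀ i ∈ s, σ i ≤ a₁ i * b₁ i + a₂ i * b₂ i := by
    intro i hi
    have h1 : σ i = (star (ue i) ⬝ᵥ (A *ᵥ v i)).re := by
      rw [← hrep i hi, Complex.ofReal_re]
    have h2 : star (ue i) ⬝ᵥ (A *ᵥ v i)
        = star (X₁ᴴ *ᵥ ue i) ⬝ᵥ (Y₁ *ᵥ v i) + star (X₂ᴴ *ᵥ ue i) ⬝ᵥ (Y₂ *ᵥ v i) := by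
      rw [hAdef, Matrix.add_mulVec, dotProduct_add, hadj, hadj]
    rw [h1, h2, Complex.add_re]
    have h3 : ∀ (X : Matrix n n ℂ) (w : n → ℂ),
        (star (X *ᵥ ue i) ⬝ᵥ w).re ≤ ‖e.symm (X *ᵥ ue i)‖ * ‖e.symm w‖ := by
      intro X w
      have := re_inner_le_norm (𝕜 := ℂ) (e.symm (X *ᵥ ue i)) (e.symm w)
      rwa [EuclideanSpace.inner_piLp_equiv_symm] at this
    exact add_le_add (h3 X₁ᴴ _) (h3 X₂ᴴ _)
  -- orthonormality of the u-family on s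
  have hu : Orthonormal ℂ (fun i : {x // x ∈ s} => e.symm (ue i)) := by
    rw [orthonormal_iff_ite]
    intro i j
    have : (inner ℂ (e.symm (ue i.1)) (e.symm (ue j.1)) : ℂ) = star (ue i.1) ⬝ᵥ ue j.1 :=
      EuclideanSpace.inner_piLp_equiv_symm _ _
    rw [this, huedef]
    simp only [star_smul, smul_dotProduct, dotProduct_smul, key]
    rw [star_inv₀]
    by_cases hij : i = j
    · subst hij
      simp only [if_pos rfl, Subtype.coe_eta]
      rw [hlam_s i.1 i.2]
      have hne := hσne i.1 i.2
      have : (starRingEnd ℂ) ((σ i.1 : ℂ)) = ((σ i.1 : ℂ)) := Complex.conj_ofReal _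
      rw [RCLike.star_def, this]
      push_cast
      field_simp
      ring_nf; simp [hne]
    · have : (i : n) ≠ (j : n) := fun hc => hij (Subtype.ext hc)
      rw [if_neg this, if_neg hij]
      simp
  -- Bessel bounds
  have hb₁sum : ∑ i ∈ s, b₁ i ^ 2 ≤ (Y₁ᴴ * Y₁).trace.re :=
    bessel_frob (h.eigenvectorBasis.orthonormal) s Y₁
  have hb₂sum : ∑ i ∈ s, b₂ i ^ 2 ≤ (Y₂ᴴ * Y₂).trace.re :=
    bessel_frob (h.eigenvectorBasis.orthonormal) s Y₂
  have ha₁sum : ∑ i ∈ s, a₁ i ^ 2 ≤ (X₁ᴴ * X₁).trace.re := by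
    have := bessel_frob hu Finset.univ X₁ᴴ
    rw [Matrix.conjTranspose_conjTranspose, Matrix.trace_mul_comm] at this
    calc ∑ i ∈ s, a₁ i ^ 2 = ∑ i : {x // x ∈ s}, a₁ i.1 ^ 2 :=
          (Finset.sum_coe_sort s (fun i => a₁ i ^ 2)).symm
      _ ≤ _ := this
  have ha₂sum : ∑ i ∈ s, a₂ i ^ 2 ≤ (X₂ᴴ * X₂).trace.re := by
    have := bessel_frob hu Finset.univ X₂ᴴ
    rw [Matrix.conjTranspose_conjTranspose, Matrix.trace_mul_comm] at this
    calc ∑ i ∈ s, a₂ i ^ 2 = ∑ i : {x // x ∈ s}, a₂ i.1 ^ 2 :=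
          (Finset.sum_coe_sort s (fun i => a₂ i ^ 2)).symm
      _ ≤ _ := this
  -- assemble
  calc traceNorm A = ∑ i ∈ s, σ i := by rw [htr, hsum]
    _ ≤ ∑ i ∈ s, (a₁ i * b₁ i + a₂ i * b₂ i) := Finset.sum_le_sum step
    _ = ∑ i ∈ s, a₁ i * b₁ i + ∑ i ∈ s, a₂ i * b₂ i := Finset.sum_add_distrib
    _ ≤ Real.sqrt (∑ i ∈ s, a₁ i ^ 2) * Real.sqrt (∑ i ∈ s, b₁ i ^ 2)
        + Real.sqrt (∑ i ∈ s, a₂ i ^ 2) * Real.sqrt (∑ i ∈ s, b₂ i ^ 2) :=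
        add_le_add
          (cs_sum s a₁ b₁ (fun i _ => norm_nonneg _) (fun i _ => norm_nonneg _))
          (cs_sum s a₂ b₂ (fun i _ => norm_nonneg _) (fun i _ => norm_nonneg _))
    _ ≤ _ :=
        add_le_add
          (mul_le_mul (Real.sqrt_le_sqrt ha₁sum) (Real.sqrt_le_sqrt hb₁sum)
            (Real.sqrt_nonneg _) (Real.sqrt_nonneg _))
          (mul_le_mul (Real.sqrt_le_sqrt ha₂sum) (Real.sqrt_le_sqrt hb₂sum)
            (Real.sqrt_nonneg _) (Real.sqrt_nonneg _))

end Aux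

/-- gentle measurement: for a sub-state `ρ` and an orthogonal
projector `P`, `‖ρ − PρP‖₁ ≤ 2 √(Tr((1 − P)ρ))`. -/
theorem gentle_measurement {n : Type*} [Fintype n] [DecidableEq n]
    (ρ P : Matrix n n ℂ) (hρ : ρ.PosSemidef) (hρt : ρ.trace.re ≤ 1)
    (hP : P.IsHermitian) (hP2 : P * P = P) :
    traceNorm (ρ - P * ρ * P) ≤ 2 * Real.sqrt (((1 - P) * ρ).trace.re) := by
  set S := hρ.sqrt with hSdef
  have hSps : S.PosSemidef := hρ.posSemidef_sqrt
  have hS : Sᴴ = S := hSps.1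
  have hSS : S * S = ρ := hρ.sqrt_mul_self
  set Q : Matrix n n ℂ := 1 - P with hQdef
  have hQh : Qᴴ = Q := by
    rw [hQdef, Matrix.conjTranspose_sub, Matrix.conjTranspose_one, hP]
  have hQ2 : Q * Q = Q := by
    rw [hQdef, Matrix.sub_mul, Matrix.one_mul, Matrix.mul_sub, Matrix.mul_one, hP2]
    abel
  -- decomposition
  have hdec : ρ - P * ρ * P = (Q * S) * S + (P * S) * (S * Q) := by
    have h1 : (Q * S) * S = Q * ρ := by rw [Matrix.mul_assoc, hSS]
    have h2 : (P * S) * (S * Q) = P * ρ * Q := by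
      rw [Matrix.mul_assoc, ← Matrix.mul_assoc S S Q, hSS, ← Matrix.mul_assoc]
    rw [h1, h2, hQdef]
    rw [Matrix.sub_mul, Matrix.one_mul, Matrix.mul_sub, Matrix.mul_one]
    abel
  -- traces
  have t1 : ((Q * S)ᴴ * (Q * S)).trace = (Q * ρ).trace := by
    have hm : (Q * S)ᴴ * (Q * S) = S * (Q * S) := by
      rw [Matrix.conjTranspose_mul, hS, hQh, Matrix.mul_assoc, ← Matrix.mul_assoc Q Q S, hQ2]
    rw [hm, Matrix.trace_mul_comm, Matrix.mul_assoc, hSS]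
  have t2 : (Sᴴ * S).trace = ρ.trace := by rw [hS, hSS]
  have t3 : ((P * S)ᴴ * (P * S)).trace = (P * ρ).trace := by
    have hm : (P * S)ᴴ * (P * S) = S * (P * S) := by
      rw [Matrix.conjTranspose_mul, hS, hP, Matrix.mul_assoc, ← Matrix.mul_assoc P P S, hP2]
    rw [hm, Matrix.trace_mul_comm, Matrix.mul_assoc, hSS]
  have t4 : ((S * Q)ᴴ * (S * Q)).trace = (Q * ρ).trace := by
    have hm : (S * Q)ᴴ * (S * Q) = Q * (ρ * Q) := by
      rw [Matrix.conjTranspose_mul, hS, hQh, Matrix.mul_assoc, ← Matrix.mul_assoc S S Q, hSS]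
    rw [hm, Matrix.trace_mul_comm, Matrix.mul_assoc, hQ2, Matrix.trace_mul_comm]
  -- nonnegativity facts
  have hQρ0 : 0 ≤ (Q * ρ).trace.re := by rw [← t1]; exact frob_nonneg _
  have hPρ0 : 0 ≤ (P * ρ).trace.re := by rw [← t3]; exact frob_nonneg _
  have hρ0 : 0 ≤ ρ.trace.re := by rw [← t2]; exact frob_nonneg _
  have hsplit : (P * ρ).trace.re + (Q * ρ).trace.re = ρ.trace.re := by
    have : (P * ρ).trace + (Q * ρ).trace = ρ.trace := by
      rw [hQdef, Matrix.sub_mul, Matrix.one_mul, Matrix.trace_sub]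
      abel
    calc (P * ρ).trace.re + (Q * ρ).trace.re = ((P * ρ).trace + (Q * ρ).trace).re := by
          rw [Complex.add_re]
      _ = ρ.trace.re := by rw [this]
  have hPρ1 : (P * ρ).trace.re ≤ 1 := by linarith
  -- main bound
  have hmain := traceNorm_two_mul_le (Q * S) S (P * S) (S * Q)
  rw [← hdec, t1, t2, t3, t4] at hmain
  have hb1 : Real.sqrt (ρ.trace.re) ≤ 1 := Real.sqrt_le_one.mpr hρt
  have hb2 : Real.sqrt ((P * ρ).trace.re) ≤ 1 := Real.sqrt_le_one.mpr hPρ1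
  have hQε : Real.sqrt ((Q * ρ).trace.re) = Real.sqrt (((1 - P) * ρ).trace.re) := by rw [hQdef]
  calc traceNorm (ρ - P * ρ * P)
      ≤ Real.sqrt ((Q * ρ).trace.re) * Real.sqrt (ρ.trace.re)
        + Real.sqrt ((P * ρ).trace.re) * Real.sqrt ((Q * ρ).trace.re) := hmain
    _ ≤ Real.sqrt ((Q * ρ).trace.re) * 1 + 1 * Real.sqrt ((Q * ρ).trace.re) :=
        add_le_add
          (mul_le_mul_of_nonneg_left hb1 (Real.sqrt_nonneg _))
          (mul_le_mul_of_nonneg_right hb2 (Real.sqrt_nonneg _))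
    _ = 2 * Real.sqrt (((1 - P) * ρ).trace.re) := by rw [hQε]; ring
end

section
/- (Spectrum discretization) Let σ be a density matrix on ℂ^d and 0 < ε < 1. Define σ' by rounding each eigenvalue of σ lying in (ε⁴/d⁷, 1] up to the nearest value of the form (1+ε)^n · ε⁴/d⁷ and discarding eigenvalues ≤ ε⁴/d⁷. Then σ ⪯ σ' + (ε⁴/d⁷)·1, Π σ Π ⪯ σ' ⪯ (1+ε) Π σ Π where Π projects onto eigenvectors of σ with eigenvalue > ε⁴/d⁷, Tr σ' ≤ 1+ε, and the number of distinct eigenvalues of σ' is at most ⌈7 log(d/ε)/log(1+ε)⌉. -/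
open Matrix ComplexOrder

/-- Round `x ∈ (c, 1]` up to the nearest value `(1+ε)^n · c`; values `≤ c`
are discarded (sent to `0`). -/
noncomputable def rnd (ε c x : ℝ) : ℝ :=
  if x ≤ c then 0 else (1 + ε) ^ (⌈Real.logb (1 + ε) (x / c)⌉₊) * c

/-- The matrix `σ'` obtained from a Hermitian `σ` by rounding each eigenvalue
in `(ε⁴/d⁷, 1]` up to the nearest `(1+ε)^n · ε⁴/d⁷` and discarding the
eigenvalues `≤ ε⁴/d⁷`. -/
noncomputable def discretize {d : ℕ} (ε : ℝ) (σ : Matrix (Fin d) (Fin d) ℂ)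
    (h : σ.IsHermitian) : Matrix (Fin d) (Fin d) ℂ :=
  (h.eigenvectorUnitary : Matrix (Fin d) (Fin d) ℂ) *
    Matrix.diagonal (fun i => (rnd ε (ε ^ 4 / (d : ℝ) ^ 7) (h.eigenvalues i) : ℂ)) *
    (h.eigenvectorUnitary : Matrix (Fin d) (Fin d) ℂ)ᴴ

/-- The projector onto the eigenvectors of `σ` with eigenvalue `> ε⁴/d⁷`. -/
noncomputable def bigEigProj {d : ℕ} (ε : ℝ) (σ : Matrix (Fin d) (Fin d) ℂ)
    (h : σ.IsHermitian) : Matrix (Fin d) (Fin d) ℂ :=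
  (h.eigenvectorUnitary : Matrix (Fin d) (Fin d) ℂ) *
    Matrix.diagonal (fun i => if ε ^ 4 / (d : ℝ) ^ 7 < h.eigenvalues i then (1 : ℂ) else 0) *
    (h.eigenvectorUnitary : Matrix (Fin d) (Fin d) ℂ)ᴴ

lemma rnd_ge' {ε c x : ℝ} (hε : 0 < ε) (hc : 0 < c) (hx : c < x) : x ≤ rnd ε c x := by
  unfold rnd
  rw [if_neg (not_le.mpr hx)]
  have hb : (1:ℝ) < 1 + ε := by linarith
  have hxc : 1 < x / c := (one_lt_div hc).mpr hx
  have h : x / c ≤ (1 + ε) ^ (⌈Real.logb (1 + ε) (x / c)⌉₊) := by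
    calc x / c = (1 + ε) ^ (Real.logb (1 + ε) (x / c)) :=
          (Real.rpow_logb (by linarith) (by linarith) (by linarith)).symm
      _ ≤ (1 + ε) ^ ((⌈Real.logb (1 + ε) (x / c)⌉₊ : ℝ)) :=
          Real.rpow_le_rpow_of_exponent_le (le_of_lt hb) (Nat.le_ceil _)
      _ = (1 + ε) ^ (⌈Real.logb (1 + ε) (x / c)⌉₊) := Real.rpow_natCast _ _
  calc x = (x / c) * c := by field_simp
    _ ≤ _ := by nlinarith

lemma rnd_nonneg' {ε c x : ℝ} (hε : 0 < ε) (hc : 0 < c) : 0 ≤ rnd ε c x := by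
  unfold rnd; split_ifs with h
  · exact le_rfl
  · have h1 : (0:ℝ) < 1 + ε := by linarith
    positivity

lemma rnd_lb' {ε c x : ℝ} (hε : 0 < ε) (hc : 0 < c) :
    (if c < x then x else 0) ≤ rnd ε c x := by
  split_ifs with h
  · exact rnd_ge' hε hc h
  · exact rnd_nonneg' hε hc

lemma rnd_ub' {ε c x : ℝ} (hε : 0 < ε) (hc : 0 < c) :
    rnd ε c x ≤ (1 + ε) * (if c < x then x else 0) := by
  unfold rnd
  split_ifs with h1 h2 h2
  · linarith
  · have h1 : (0:ℝ) < 1 + ε := by linarith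
    positivity
  · have hb : (1:ℝ) < 1 + ε := by linarith
    have hxc : 1 < x / c := (one_lt_div hc).mpr h2
    have ht : 0 ≤ Real.logb (1 + ε) (x / c) :=
      Real.logb_nonneg hb (le_of_lt hxc)
    have h : (1 + ε) ^ (⌈Real.logb (1 + ε) (x / c)⌉₊)
        ≤ (1 + ε) * (x / c) := by
      calc (1 + ε) ^ (⌈Real.logb (1 + ε) (x / c)⌉₊)
          = (1 + ε) ^ ((⌈Real.logb (1 + ε) (x / c)⌉₊ : ℝ)) := (Real.rpow_natCast _ _).symm
        _ ≤ (1 + ε) ^ (Real.logb (1 + ε) (x / c) + 1) :=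
            Real.rpow_le_rpow_of_exponent_le (le_of_lt hb)
              (le_of_lt (Nat.ceil_lt_add_one ht))
        _ = (1 + ε) ^ (Real.logb (1 + ε) (x / c)) * (1 + ε) := by
            rw [Real.rpow_add (by linarith), Real.rpow_one]
        _ = (x / c) * (1 + ε) := by
            rw [Real.rpow_logb (by linarith) (by linarith) (by linarith)]
        _ = (1 + ε) * (x / c) := mul_comm _ _
    calc (1 + ε) ^ (⌈Real.logb (1 + ε) (x / c)⌉₊) * c ≤ (1 + ε) * (x / c) * c := by nlinarith
      _ = (1 + ε) * x := by field_simp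
  · linarith

/-- spectrum discretization: for a density matrix `σ` on `ℂ^d`
and `0 < ε < 1`, the rounded matrix `σ'` satisfies `σ ⪯ σ' + (ε⁴/d⁷)·1`,
`ΠσΠ ⪯ σ' ⪯ (1+ε)ΠσΠ`, `Tr σ' ≤ 1+ε`, and it has at most
`⌈7 log(d/ε)/log(1+ε)⌉` distinct nonzero eigenvalues. -/
theorem spectrum_discretization {d : ℕ} (hd : 0 < d)
    (σ : Matrix (Fin d) (Fin d) ℂ) (hσ : σ.PosSemidef) (hσt : σ.trace = 1)
    (ε : ℝ) (hε0 : 0 < ε) (hε1 : ε < 1) :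
    ((discretize ε σ hσ.1 + (ε ^ 4 / (d : ℝ) ^ 7) • (1 : Matrix (Fin d) (Fin d) ℂ)
        - σ).PosSemidef) ∧
    ((discretize ε σ hσ.1 -
        bigEigProj ε σ hσ.1 * σ * bigEigProj ε σ hσ.1).PosSemidef) ∧
    (((1 + ε) • (bigEigProj ε σ hσ.1 * σ * bigEigProj ε σ hσ.1)
        - discretize ε σ hσ.1).PosSemidef) ∧
    (discretize ε σ hσ.1).trace.re ≤ 1 + ε ∧
    ((Finset.univ.image fun i =>
        rnd ε (ε ^ 4 / (d : ℝ) ^ 7) (hσ.1.eigenvalues i)).erase 0).card ≤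
      ⌈7 * Real.log ((d : ℝ) / ε) / Real.log (1 + ε)⌉₊ := by
  have hd1 : (1:ℝ) ≤ (d:ℝ) := by exact_mod_cast hd
  set c : ℝ := ε ^ 4 / (d : ℝ) ^ 7 with hc_def
  have hc : 0 < c := by positivity
  set U : Matrix (Fin d) (Fin d) ℂ := (hσ.1.eigenvectorUnitary : Matrix (Fin d) (Fin d) ℂ)
    with hU_def
  set lam : Fin d → ℝ := hσ.1.eigenvalues with hlam_def
  have hlam0 : ∀ i, 0 ≤ lam i := fun i => hσ.eigenvalues_nonneg i
  have hUU : Uᴴ * U = 1 := by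
    simpa [Matrix.star_eq_conjTranspose] using hσ.1.eigenvectorUnitary.2.1
  have hUU' : U * Uᴴ = 1 := by
    simpa [Matrix.star_eq_conjTranspose] using hσ.1.eigenvectorUnitary.2.2
  have hcan : ∀ X : Matrix (Fin d) (Fin d) ℂ, Uᴴ * (U * X) = X := fun X => by
    rw [← Matrix.mul_assoc, hUU, Matrix.one_mul]
  -- conjugated diagonals of nonneg functions are PSD
  have key : ∀ g : Fin d → ℝ, (∀ i, 0 ≤ g i) →
      (U * Matrix.diagonal (fun i => (g i : ℂ)) * Uᴴ).PosSemidef := fun g hg =>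
    (Matrix.posSemidef_diagonal_iff.mpr fun i => by
      simpa using Complex.zero_le_real.mpr (hg i)).mul_mul_conjTranspose_same _
  -- spectral theorem
  have hspec : σ = U * Matrix.diagonal (fun i => (lam i : ℂ)) * Uᴴ := by
    have := hσ.1.spectral_theorem
    rw [Unitary.conjStarAlgAut_apply] at this
    rw [← Matrix.star_eq_conjTranspose]
    exact this
  -- algebra on conjugated diagonals
  have hsub : ∀ f g : Fin d → ℝ,
      (U * Matrix.diagonal (fun i => (f i : ℂ)) * Uᴴ) -
        (U * Matrix.diagonal (fun i => (g i : ℂ)) * Uᴴ) =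
      U * Matrix.diagonal (fun i => ((f i - g i : ℝ) : ℂ)) * Uᴴ := by
    intro f g
    rw [← Matrix.sub_mul, ← Matrix.mul_sub, Matrix.diagonal_sub]
    congr 2 with i
    push_cast
    ring
  have hadd : ∀ f g : Fin d → ℝ,
      (U * Matrix.diagonal (fun i => (f i : ℂ)) * Uᴴ) +
        (U * Matrix.diagonal (fun i => (g i : ℂ)) * Uᴴ) =
      U * Matrix.diagonal (fun i => ((f i + g i : ℝ) : ℂ)) * Uᴴ := by
    intro f g
    rw [← Matrix.add_mul, ← Matrix.mul_add, Matrix.diagonal_add]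
    congr 2 with i
    push_cast
    ring
  have hmulU : ∀ f g : Fin d → ℝ,
      (U * Matrix.diagonal (fun i => (f i : ℂ)) * Uᴴ) *
        (U * Matrix.diagonal (fun i => (g i : ℂ)) * Uᴴ) =
      U * Matrix.diagonal (fun i => ((f i * g i : ℝ) : ℂ)) * Uᴴ := by
    intro f g
    calc (U * Matrix.diagonal (fun i => (f i : ℂ)) * Uᴴ) *
          (U * Matrix.diagonal (fun i => (g i : ℂ)) * Uᴴ)
        = U * (Matrix.diagonal (fun i => (f i : ℂ)) *
            (Uᴴ * (U * (Matrix.diagonal (fun i => (g i : ℂ)) * Uᴴ)))) := by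
          simp only [Matrix.mul_assoc]
      _ = U * Matrix.diagonal (fun i => (f i : ℂ)) *
            Matrix.diagonal (fun i => (g i : ℂ)) * Uᴴ := by
          rw [hcan]; simp only [Matrix.mul_assoc]
      _ = _ := by
          rw [Matrix.mul_assoc U, Matrix.diagonal_mul_diagonal]
          congr 2 with i
          push_cast
          ring
  have hsmul : ∀ (r : ℝ) (f : Fin d → ℝ),
      r • (U * Matrix.diagonal (fun i => (f i : ℂ)) * Uᴴ) =
      U * Matrix.diagonal (fun i => ((r * f i : ℝ) : ℂ)) * Uᴴ := by
    intro r f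
    have hfun : (fun i => ((r * f i : ℝ) : ℂ)) = r • (fun i => ((f i : ℝ) : ℂ)) := by
      funext i
      simp [Complex.real_smul]
    rw [hfun, Matrix.diagonal_smul, Matrix.mul_smul, Matrix.smul_mul]
  have hid : c • (1 : Matrix (Fin d) (Fin d) ℂ) =
      U * Matrix.diagonal (fun _ : Fin d => ((c : ℝ) : ℂ)) * Uᴴ := by
    have h1 : Matrix.diagonal (fun _ : Fin d => ((c : ℝ) : ℂ)) =
        c • (1 : Matrix (Fin d) (Fin d) ℂ) := by
      ext i j
      by_cases h : i = j <;>
        simp [Matrix.diagonal_apply, Matrix.one_apply, h, Complex.real_smul]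
    rw [h1, Matrix.mul_smul, Matrix.smul_mul, Matrix.mul_one, hUU']
  -- identify discretize and bigEigProj
  have hdisc : discretize ε σ hσ.1 =
      U * Matrix.diagonal (fun i => ((rnd ε c (lam i) : ℝ) : ℂ)) * Uᴴ := rfl
  have hproj : bigEigProj ε σ hσ.1 =
      U * Matrix.diagonal (fun i => ((if c < lam i then (1:ℝ) else 0 : ℝ) : ℂ)) * Uᴴ := by
    have hfun : (fun i => if ε ^ 4 / (d : ℝ) ^ 7 < hσ.1.eigenvalues i then (1:ℂ) else 0)
        = (fun i => ((if c < lam i then (1:ℝ) else 0 : ℝ) : ℂ)) := by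
      funext i
      rw [← hc_def, ← hlam_def]
      split_ifs <;> simp
    unfold bigEigProj
    rw [hfun]
  have hPSP : bigEigProj ε σ hσ.1 * σ * bigEigProj ε σ hσ.1 =
      U * Matrix.diagonal (fun i => ((if c < lam i then lam i else 0 : ℝ) : ℂ)) * Uᴴ := by
    rw [hproj, hspec, hmulU, hmulU]
    have hfun : (fun i => (((if c < lam i then (1:ℝ) else 0) * lam i *
          (if c < lam i then (1:ℝ) else 0) : ℝ) : ℂ))
        = (fun i => ((if c < lam i then lam i else 0 : ℝ) : ℂ)) := by
      funext i
      congr 1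
      split_ifs <;> ring
    rw [hfun]
  -- eigenvalue sum
  have htrdiag : ∀ f : Fin d → ℝ,
      (U * Matrix.diagonal (fun i => ((f i : ℝ) : ℂ)) * Uᴴ).trace = ∑ i, ((f i : ℝ) : ℂ) := by
    intro f
    rw [Matrix.trace_mul_cycle, hUU, Matrix.one_mul, Matrix.trace_diagonal]
  have hsum1 : ∑ i, lam i = 1 := by
    have h1 : σ.trace = ∑ i, ((lam i : ℝ) : ℂ) := by rw [hspec]; exact htrdiag _
    rw [hσt] at h1
    have h2 : ((∑ i, lam i : ℝ) : ℂ) = ((1:ℝ) : ℂ) := by push_cast; rw [← h1]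
    exact_mod_cast h2
  have hlam1 : ∀ i, lam i ≤ 1 := by
    intro i
    rw [← hsum1]
    exact Finset.single_le_sum (fun j _ => hlam0 j) (Finset.mem_univ i)
  refine ⟨?_, ?_, ?_, ?_, ?_⟩
  · -- σ ⪯ σ' + c·1
    rw [hdisc, hid, hspec, hadd, hsub]
    exact key _ fun i => by
      have := rnd_lb' (c := c) (x := lam i) hε0 hc
      have h2 : (if c < lam i then lam i else 0) ≤ rnd ε c (lam i) := this
      split_ifs at h2 <;> nlinarith [hlam0 i]
  · -- ΠσΠ ⪯ σ'
    rw [hdisc, hPSP, hsub]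
    exact key _ fun i => sub_nonneg.mpr (rnd_lb' hε0 hc)
  · -- σ' ⪯ (1+ε)ΠσΠ
    rw [hdisc, hPSP, hsmul, hsub]
    exact key _ fun i => sub_nonneg.mpr (rnd_ub' hε0 hc)
  · -- trace bound
    rw [hdisc, htrdiag]
    have : (∑ i, ((rnd ε c (lam i) : ℝ) : ℂ)).re = ∑ i, rnd ε c (lam i) := by
      simp [Complex.ofReal_re]
    rw [this]
    calc ∑ i, rnd ε c (lam i)
        ≤ ∑ i, (1 + ε) * lam i := by
          apply Finset.sum_le_sum
          intro i _
          refine (rnd_ub' hε0 hc).trans ?_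
          split_ifs with h
          · exact le_rfl
          · have := hlam0 i; nlinarith
      _ = (1 + ε) * ∑ i, lam i := by rw [Finset.mul_sum]
      _ = 1 + ε := by rw [hsum1, mul_one]
  · -- cardinality
    have hb : (1:ℝ) < 1 + ε := by linarith
    set N : ℕ := ⌈Real.logb (1 + ε) (1 / c)⌉₊ with hN_def
    have hsubset : ((Finset.univ.image fun i => rnd ε c (lam i)).erase 0) ⊆
        Finset.image (fun n : ℕ => (1 + ε) ^ n * c) (Finset.Icc 1 N) := by
      intro y hy
      obtain ⟨hy0, hy1⟩ := Finset.mem_erase.mp hy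
      obtain ⟨i, _, hi⟩ := Finset.mem_image.mp hy1
      by_cases h : lam i ≤ c
      · exact absurd (hi.symm.trans (by unfold rnd; rw [if_pos h])) hy0
      · push_neg at h
        have hn1 : 1 ≤ ⌈Real.logb (1 + ε) (lam i / c)⌉₊ :=
          Nat.one_le_iff_ne_zero.mpr (Nat.pos_iff_ne_zero.mp
            (Nat.ceil_pos.mpr (Real.logb_pos hb ((one_lt_div hc).mpr h))))
        have hn2 : ⌈Real.logb (1 + ε) (lam i / c)⌉₊ ≤ N := by
          apply Nat.ceil_le_ceil
          apply Real.logb_le_logb_of_le hb (div_pos (hc.trans h) hc)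
          exact div_le_div_of_nonneg_right (hlam1 i) hc.le
        refine Finset.mem_image.mpr ⟨⌈Real.logb (1 + ε) (lam i / c)⌉₊,
          Finset.mem_Icc.mpr ⟨hn1, hn2⟩, ?_⟩
        rw [← hi]
        unfold rnd
        rw [if_neg (not_le.mpr h)]
    calc ((Finset.univ.image fun i => rnd ε c (lam i)).erase 0).card
        ≤ (Finset.image (fun n : ℕ => (1 + ε) ^ n * c) (Finset.Icc 1 N)).card :=
          Finset.card_le_card hsubset
      _ ≤ (Finset.Icc 1 N).card := Finset.card_image_le
      _ = N := by simp [Nat.card_Icc]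
      _ ≤ ⌈7 * Real.log ((d : ℝ) / ε) / Real.log (1 + ε)⌉₊ := by
        apply Nat.ceil_le_ceil
        rw [Real.logb]
        have hlog : 0 < Real.log (1 + ε) := Real.log_pos hb
        apply div_le_div_of_nonneg_right ?_ hlog.le
        rw [Real.log_div one_ne_zero hc.ne', Real.log_one, zero_sub, hc_def,
          Real.log_div (by positivity) (by positivity), Real.log_pow, Real.log_pow,
          Real.log_div (by positivity) (by positivity)]
        have hloge : Real.log ε ≤ 0 := Real.log_nonpos hε0.le hε1.le
        push_cast
        nlinarith [Real.log_nonneg hd1]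
end
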